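/- Let G be a finite d-regular graph, S ⊆ V(G), and f : V(G) → [0,1] with ‖f‖₁ = μ(S) and ‖f - χ_S‖ < √(μ(S))/6. Then there exists a set U ⊆ supp(f) such that μ(U) < 2μ(S), μ(U ∩ S) > (3/4)μ(S), and ‖χ_U - Mχ_U‖₁ ≤ 4·d^{1/2}·72^{1/4}·μ(S)^{3/4}·‖f - Mf‖^{1/2}. -/

import Mathlib

open Finset

noncomputable def markov {V : Type*} [Fintype V] (G : SimpleGraph V) [DecidableRel G.Adj]
    (d : ℕ) (f : V → ℝ) : V → ℝ :=
  fun v => (∑ u ∈ G.neighborFinset v, f u) / d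

noncomputable def l2norm {V : Type*} [Fintype V] (f : V → ℝ) : ℝ :=
  Real.sqrt ((∑ v, f v ^ 2) / Fintype.card V)

noncomputable def l1norm {V : Type*} [Fintype V] (f : V → ℝ) : ℝ :=
  (∑ v, |f v|) / Fintype.card V

noncomputable def indic {V : Type*} [DecidableEq V] (S : Finset V) : V → ℝ :=
  fun v => if v ∈ S then 1 else 0

private lemma le_of_sq_le' {x y : ℝ} (h : x^2 ≤ y^2) (hy : 0 ≤ y) : x ≤ y := by
  calc x ≤ |x| := le_abs_self x
  _ = Real.sqrt (x^2) := (Real.sqrt_sq_eq_abs x).symm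
  _ ≤ Real.sqrt (y^2) := Real.sqrt_le_sqrt h
  _ = y := Real.sqrt_sq hy

/-- grid point counting: at most `2K(b-a)+1` grid points `1/6+(2k+1)/(4K)` lie in `[a,b)`. -/
private lemma grid_count {K : ℕ} {a b : ℝ} (hab : a ≤ b) (T : Finset ℕ)
    (hT : ∀ k ∈ T, a ≤ 1/6 + (2*(k:ℝ)+1)/(4*(K:ℝ)) ∧ 1/6 + (2*(k:ℝ)+1)/(4*(K:ℝ)) < b)
    (hK : 0 < K) :
    (T.card : ℝ) ≤ 2*K*(b-a) + 1 := by
  have hKR : (0:ℝ) < (K:ℝ) := by exact_mod_cast hK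
  have hba : 0 ≤ 2*(K:ℝ)*(b-a) := by nlinarith
  rcases T.eq_empty_or_nonempty with h | h
  · simp [h]; linarith
  · set m := T.min' h with hm_def
    have hm : m ∈ T := T.min'_mem h
    have hsub : T ⊆ Finset.Icc m (m + ⌊2*(K:ℝ)*(b-a)⌋₊) := by
      intro k hk
      rw [Finset.mem_Icc]
      refine ⟨T.min'_le k hk, ?_⟩
      have h1 := (hT k hk).2
      have h2 := (hT m hm).1
      have hmk : m ≤ k := T.min'_le k hk
      have hdiff : ((k:ℝ) - m)/(2*K) < b - a := by
        have e : (1/6 + (2*(k:ℝ)+1)/(4*K)) - (1/6 + (2*(m:ℝ)+1)/(4*K)) = ((k:ℝ)-m)/(2*K) := by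
          field_simp; ring
        linarith [e ▸ (by linarith : (1/6 + (2*(k:ℝ)+1)/(4*K)) - (1/6 + (2*(m:ℝ)+1)/(4*K)) < b - a)]
      have hkm : ((k - m : ℕ) : ℝ) ≤ 2*K*(b-a) := by
        rw [Nat.cast_sub hmk]
        have := (div_lt_iff₀ (by positivity : (0:ℝ) < 2*K)).mp hdiff
        nlinarith
      have : k - m ≤ ⌊2*(K:ℝ)*(b-a)⌋₊ := Nat.le_floor hkm
      omega
    calc (T.card : ℝ) ≤ ((Finset.Icc m (m + ⌊2*(K:ℝ)*(b-a)⌋₊)).card : ℝ) := by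
          exact_mod_cast Finset.card_le_card hsub
      _ = (⌊2*(K:ℝ)*(b-a)⌋₊ : ℝ) + 1 := by
          have : (Finset.Icc m (m + ⌊2*(K:ℝ)*(b-a)⌋₊)).card = ⌊2*(K:ℝ)*(b-a)⌋₊ + 1 := by
            rw [Nat.card_Icc]; omega
          rw [this]; push_cast; ring
      _ ≤ 2*K*(b-a) + 1 := by linarith [Nat.floor_le hba]

set_option maxHeartbeats 4000000 in
/-- Lemma 2 of the paper: if `f : V → [0,1]` has `‖f‖₁ = μ(S)` and `‖f - χ_S‖ < √(μ(S))/6`,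
then there is `U ⊆ supp(f)` with `μ(U) < 2μ(S)`, `μ(U ∩ S) > (3/4)μ(S)` and
`‖χ_U - Mχ_U‖₁ ≤ 4·√d·72^{1/4}·μ(S)^{3/4}·‖f - Mf‖^{1/2}`. -/
theorem stmt8 {V : Type*} [Fintype V] [DecidableEq V] (G : SimpleGraph V) [DecidableRel G.Adj]
    (d : ℕ) (hd : 1 ≤ d) (hreg : ∀ v, G.degree v = d)
    (S : Finset V) (f : V → ℝ) (hf : ∀ v, f v ∈ Set.Icc (0 : ℝ) 1)
    (h1 : l1norm f = (S.card : ℝ) / Fintype.card V)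
    (h2 : l2norm (fun v => f v - indic S v)
        < Real.sqrt ((S.card : ℝ) / Fintype.card V) / 6) :
    ∃ U : Finset V,
      (∀ v ∈ U, 0 < f v) ∧
      ((U.card : ℝ) / Fintype.card V < 2 * ((S.card : ℝ) / Fintype.card V)) ∧
      ((3 / 4 : ℝ) * ((S.card : ℝ) / Fintype.card V)
          < ((U ∩ S).card : ℝ) / Fintype.card V) ∧
      l1norm (fun v => indic U v - markov G d (indic U) v)
        ≤ 4 * Real.sqrt d * (72 : ℝ) ^ ((1 : ℝ) / 4)
            * ((S.card : ℝ) / Fintype.card V) ^ ((3 : ℝ) / 4)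
            * Real.sqrt (l2norm (fun v => f v - markov G d f v)) := by
  classical
  set n : ℝ := (Fintype.card V : ℝ) with hn_def
  set s : ℝ := (S.card : ℝ) / n with hs_def
  set E : ℝ := l2norm (fun v => f v - markov G d f v) with hE_def
  -- basic positivity
  have hl2nn : 0 ≤ l2norm (fun v => f v - indic S v) := Real.sqrt_nonneg _
  have hsqrt_pos : 0 < Real.sqrt s := by nlinarith
  have hs : 0 < s := Real.sqrt_pos.mp hsqrt_pos
  have hn : 0 < n := by
    rcases (Nat.cast_nonneg (Fintype.card V) : (0:ℝ) ≤ n).eq_or_lt with h | h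
    · exfalso; rw [hs_def, hn_def, ← h, div_zero] at hs; exact lt_irrefl 0 hs
    · exact h
  have hd0 : (0:ℝ) < (d:ℝ) := by exact_mod_cast Nat.lt_of_lt_of_le Nat.zero_lt_one hd
  have hsn : s * n = (S.card : ℝ) := by rw [hs_def]; field_simp
  have hEnn : 0 ≤ E := Real.sqrt_nonneg _
  -- sum facts
  have hfsum : ∑ v, f v = s * n := by
    have h1' := h1
    unfold l1norm at h1'
    have habs : ∑ v, |f v| = ∑ v, f v :=
      Finset.sum_congr rfl fun v _ => abs_of_nonneg (hf v).1
    rw [habs] at h1'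
    rw [← h1', div_mul_cancel₀ _ hn.ne']
  have hAB : ∑ v, (f v - indic S v)^2 < s * n / 36 := by
    have h2' := h2
    unfold l2norm at h2'
    have h6 : Real.sqrt s / 6 = Real.sqrt (s/36) := by
      rw [Real.sqrt_div hs.le, show Real.sqrt 36 = 6 by
        rw [show (36:ℝ) = 6^2 by norm_num, Real.sqrt_sq (by norm_num : (0:ℝ) ≤ 6)]]
    have hlt : (∑ v, (f v - indic S v)^2) / n < s / 36 := by
      have hx : (0:ℝ) ≤ (∑ v, (f v - indic S v)^2) / n := by positivity
      have := (Real.sqrt_lt_sqrt_iff hx).mp (by rw [← h6]; exact h2')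
      exact this
    calc ∑ v, (f v - indic S v)^2 = ((∑ v, (f v - indic S v)^2) / n) * n := by
          field_simp
      _ < (s/36) * n := by exact mul_lt_mul_of_pos_right hlt hn
      _ = s * n / 36 := by ring
  have hfsq : ∑ v, f v^2 ≤ s * n := by
    rw [← hfsum]
    exact Finset.sum_le_sum fun v _ => by nlinarith [(hf v).1, (hf v).2]
  have hE2 : ∑ v, (f v - markov G d f v)^2 = E^2 * n := by
    have : E^2 = (∑ v, (f v - markov G d f v)^2) / n := by
      rw [hE_def]
      unfold l2norm
      rw [← hn_def, Real.sq_sqrt (by positivity)]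
    rw [this, div_mul_cancel₀ _ hn.ne']
  -- pair set
  set P : Finset (V × V) := Finset.univ.filter (fun p => G.Adj p.1 p.2) with hP_def
  have hPsum : ∀ F : V × V → ℝ, ∑ p ∈ P, F p = ∑ v, ∑ u ∈ G.neighborFinset v, F (v, u) := by
    intro F
    rw [hP_def, Finset.sum_filter, Fintype.sum_prod_type]
    refine Finset.sum_congr rfl fun v _ => ?_
    rw [show G.neighborFinset v = Finset.univ.filter (G.Adj v) from by ext u; simp,
      Finset.sum_filter]
  have hswap : ∀ F : V → V → ℝ, (∑ p ∈ P, F p.1 p.2) = ∑ p ∈ P, F p.2 p.1 := by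
    intro F
    refine Finset.sum_equiv (Equiv.prodComm V V) (fun p => ?_) (fun p _ => rfl)
    simp only [hP_def, Finset.mem_filter, Finset.mem_univ, true_and, Equiv.prodComm_apply,
      Prod.fst_swap, Prod.snd_swap]
    exact G.adj_comm p.1 p.2
  have hdeg : ∀ v : V, ((G.neighborFinset v).card : ℝ) = d := by
    intro v; rw [G.card_neighborFinset_eq_degree, hreg v]
  have hQid : ∑ p ∈ P, (f p.1 - f p.2)^2
      = 2*d*(∑ v, f v * (f v - markov G d f v)) := by
    have e1 : ∑ p ∈ P, (f p.1)^2 = d * ∑ v, (f v)^2 := by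
      rw [hPsum (fun p => (f p.1)^2)]
      calc ∑ v, ∑ u ∈ G.neighborFinset v, (f v)^2
          = ∑ v, (d:ℝ) * (f v)^2 := by
            refine Finset.sum_congr rfl fun v _ => ?_
            rw [Finset.sum_const, nsmul_eq_mul, hdeg]
        _ = d * ∑ v, (f v)^2 := by rw [Finset.mul_sum]
    have e2 : ∑ p ∈ P, (f p.2)^2 = d * ∑ v, (f v)^2 :=
      (hswap (fun a b => (f b)^2)).trans e1
    have e3 : ∑ p ∈ P, f p.1 * f p.2 = d * ∑ v, f v * markov G d f v := by
      rw [hPsum (fun p => f p.1 * f p.2)]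
      calc ∑ v, ∑ u ∈ G.neighborFinset v, f v * f u
          = ∑ v, (d:ℝ) * (f v * markov G d f v) := by
            refine Finset.sum_congr rfl fun v _ => ?_
            rw [← Finset.mul_sum]
            unfold markov
            field_simp
        _ = d * ∑ v, f v * markov G d f v := by rw [Finset.mul_sum]
    have expand : ∑ p ∈ P, (f p.1 - f p.2)^2
        = ∑ p ∈ P, (f p.1)^2 - 2 * (∑ p ∈ P, f p.1 * f p.2) + ∑ p ∈ P, (f p.2)^2 := by
      rw [Finset.mul_sum, ← Finset.sum_sub_distrib, ← Finset.sum_add_distrib]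
      exact Finset.sum_congr rfl fun p _ => by ring
    rw [expand, e1, e2, e3]
    have e4 : ∑ v, f v * (f v - markov G d f v)
        = ∑ v, (f v)^2 - ∑ v, f v * markov G d f v := by
      rw [← Finset.sum_sub_distrib]
      exact Finset.sum_congr rfl fun v _ => by ring
    rw [e4]; ring
  have hQb : ∑ p ∈ P, (f p.1 - f p.2)^2 ≤ 2*d*n*Real.sqrt s*E := by
    rw [hQid]
    have hCS2 : (∑ v, f v * (f v - markov G d f v))^2 ≤ (s*n) * (E^2 * n) := by
      calc (∑ v, f v * (f v - markov G d f v))^2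
          ≤ (∑ v, (f v)^2) * (∑ v, (f v - markov G d f v)^2) :=
            Finset.sum_mul_sq_le_sq_mul_sq Finset.univ _ _
        _ ≤ (s*n) * (E^2*n) := by
            rw [hE2]
            exact mul_le_mul_of_nonneg_right hfsq (by positivity)
    have hCS : ∑ v, f v * (f v - markov G d f v) ≤ Real.sqrt s * n * E := by
      apply le_of_sq_le' _ (mul_nonneg (mul_nonneg (Real.sqrt_nonneg _) hn.le) hEnn)
      have hy : (Real.sqrt s * n * E)^2 = s * (n^2 * E^2) := by
        rw [mul_pow, mul_pow, Real.sq_sqrt hs.le]; ring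
      rw [hy]; nlinarith [hCS2]
    calc 2*(d:ℝ)*(∑ v, f v * (f v - markov G d f v)) ≤ 2*d*(Real.sqrt s * n * E) :=
          mul_le_mul_of_nonneg_left hCS (by positivity)
      _ = 2*d*n*Real.sqrt s*E := by ring
  -- level sets
  set Uu : ℝ → Finset V := fun τ => Finset.univ.filter (fun v => τ < f v) with hUu_def
  have hind : ∀ (τ : ℝ) (v : V), indic (Uu τ) v = if τ < f v then (1:ℝ) else 0 := by
    intro τ v; simp [indic, hUu_def]
  -- measure properties of level sets
  have hmeas : ∀ τ : ℝ, 1/6 ≤ τ → τ < 2/3 →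
      (∀ v ∈ Uu τ, 0 < f v) ∧
      ((Uu τ).card : ℝ) < 2 * S.card ∧
      (3/4 : ℝ) * S.card < (((Uu τ) ∩ S).card : ℝ) := by
    intro τ h16 h23
    have hmem : ∀ v, v ∈ Uu τ ↔ τ < f v := by
      intro v; rw [hUu_def]; simp
    have hsupp : ∀ v ∈ Uu τ, 0 < f v := by
      intro v hv; rw [hmem] at hv; linarith
    have hUS : ((Uu τ \ S).card : ℝ) < s * n := by
      have hpt : ∀ v ∈ Uu τ \ S, (1:ℝ)/36 ≤ (f v - indic S v)^2 := by
        intro v hv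
        rw [Finset.mem_sdiff] at hv
        obtain ⟨hv1, hv2⟩ := hv
        rw [hmem] at hv1
        have hi : indic S v = 0 := by simp [indic, hv2]
        rw [hi]
        have : 1/6 ≤ f v := by linarith
        nlinarith
      have hlow : ((Uu τ \ S).card : ℝ) * (1/36) ≤ ∑ v ∈ Uu τ \ S, (f v - indic S v)^2 := by
        calc ((Uu τ \ S).card : ℝ) * (1/36) = ∑ _v ∈ Uu τ \ S, ((1:ℝ)/36) := by
              rw [Finset.sum_const, nsmul_eq_mul]
          _ ≤ _ := Finset.sum_le_sum hpt
      have hup : ∑ v ∈ Uu τ \ S, (f v - indic S v)^2 ≤ ∑ v, (f v - indic S v)^2 :=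
        Finset.sum_le_sum_of_subset_of_nonneg (Finset.subset_univ _) (fun _ _ _ => sq_nonneg _)
      nlinarith
    have hcard2 : ((Uu τ).card : ℝ) < 2 * S.card := by
      have hsplit : (Uu τ ∩ S).card + (Uu τ \ S).card = (Uu τ).card :=
        Finset.card_inter_add_card_sdiff (Uu τ) S
      have hle : ((Uu τ ∩ S).card : ℝ) ≤ S.card := by
        exact_mod_cast Finset.card_le_card Finset.inter_subset_right
      have hcast : ((Uu τ).card : ℝ) = ((Uu τ ∩ S).card : ℝ) + ((Uu τ \ S).card : ℝ) := by
        exact_mod_cast hsplit.symm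
      rw [hcast]
      nlinarith [hsn]
    have hSU : ((S \ Uu τ).card : ℝ) < s * n / 4 := by
      have hpt : ∀ v ∈ S \ Uu τ, (1:ℝ)/9 ≤ (f v - indic S v)^2 := by
        intro v hv
        rw [Finset.mem_sdiff] at hv
        obtain ⟨hv1, hv2⟩ := hv
        rw [hmem, not_lt] at hv2
        have hi : indic S v = 1 := by simp [indic, hv1]
        rw [hi]
        nlinarith
      have hlow : ((S \ Uu τ).card : ℝ) * (1/9) ≤ ∑ v ∈ S \ Uu τ, (f v - indic S v)^2 := by
        calc ((S \ Uu τ).card : ℝ) * (1/9) = ∑ _v ∈ S \ Uu τ, ((1:ℝ)/9) := by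
              rw [Finset.sum_const, nsmul_eq_mul]
          _ ≤ _ := Finset.sum_le_sum hpt
      have hup : ∑ v ∈ S \ Uu τ, (f v - indic S v)^2 ≤ ∑ v, (f v - indic S v)^2 :=
        Finset.sum_le_sum_of_subset_of_nonneg (Finset.subset_univ _) (fun _ _ _ => sq_nonneg _)
      nlinarith
    have hcard3 : (3/4:ℝ) * S.card < ((Uu τ ∩ S).card : ℝ) := by
      have hsplit : (S ∩ Uu τ).card + (S \ Uu τ).card = S.card :=
        Finset.card_inter_add_card_sdiff S (Uu τ)
      have hcast : ((S ∩ Uu τ).card : ℝ) + ((S \ Uu τ).card : ℝ) = (S.card : ℝ) := by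
        exact_mod_cast hsplit
      rw [Finset.inter_comm]
      nlinarith [hsn]
    exact ⟨hsupp, hcard2, hcard3⟩
  -- L1 bound via pairs
  have hl1 : ∀ τ : ℝ, l1norm (fun v => indic (Uu τ) v - markov G d (indic (Uu τ)) v)
      ≤ (∑ p ∈ P, |indic (Uu τ) p.1 - indic (Uu τ) p.2|) / ((d:ℝ)*n) := by
    intro τ
    unfold l1norm
    rw [← hn_def]
    have hpt : ∀ v, |indic (Uu τ) v - markov G d (indic (Uu τ)) v|
        ≤ (∑ u ∈ G.neighborFinset v, |indic (Uu τ) v - indic (Uu τ) u|) / d := by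
      intro v
      have hM : indic (Uu τ) v - markov G d (indic (Uu τ)) v
          = (∑ u ∈ G.neighborFinset v, (indic (Uu τ) v - indic (Uu τ) u)) / d := by
        unfold markov
        rw [Finset.sum_sub_distrib, Finset.sum_const, nsmul_eq_mul, hdeg]
        field_simp
      rw [hM, abs_div, abs_of_pos hd0]
      gcongr
      exact Finset.abs_sum_le_sum_abs _ _
    calc (∑ v, |indic (Uu τ) v - markov G d (indic (Uu τ)) v|) / n
        ≤ (∑ v, (∑ u ∈ G.neighborFinset v, |indic (Uu τ) v - indic (Uu τ) u|) / (d:ℝ)) / n := by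
          gcongr
          exact hpt _
      _ = (∑ p ∈ P, |indic (Uu τ) p.1 - indic (Uu τ) p.2|) / ((d:ℝ)*n) := by
          rw [hPsum (fun p => |indic (Uu τ) p.1 - indic (Uu τ) p.2|), ← Finset.sum_div, div_div]
  -- conversion of division goals
  have hgoal : ∀ τ : ℝ, 1/6 ≤ τ → τ < 2/3 →
      l1norm (fun v => indic (Uu τ) v - markov G d (indic (Uu τ)) v)
        ≤ 4 * Real.sqrt d * (72 : ℝ) ^ ((1 : ℝ) / 4) * s ^ ((3:ℝ)/4) * Real.sqrt E →
      ∃ U : Finset V,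
      (∀ v ∈ U, 0 < f v) ∧
      ((U.card : ℝ) / Fintype.card V < 2 * ((S.card : ℝ) / Fintype.card V)) ∧
      ((3 / 4 : ℝ) * ((S.card : ℝ) / Fintype.card V)
          < ((U ∩ S).card : ℝ) / Fintype.card V) ∧
      l1norm (fun v => indic U v - markov G d (indic U) v)
        ≤ 4 * Real.sqrt d * (72 : ℝ) ^ ((1 : ℝ) / 4)
            * ((S.card : ℝ) / Fintype.card V) ^ ((3 : ℝ) / 4)
            * Real.sqrt (l2norm (fun v => f v - markov G d f v)) := by
    intro τ h16 h23 hbound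
    obtain ⟨c1, c2, c3⟩ := hmeas τ h16 h23
    refine ⟨Uu τ, c1, ?_, ?_, hbound⟩
    · rw [div_lt_iff₀ hn]
      calc ((Uu τ).card : ℝ) < 2 * S.card := c2
        _ = 2 * ((S.card:ℝ) / n) * n := by rw [mul_assoc, div_mul_cancel₀ _ hn.ne']
    · rw [lt_div_iff₀ hn]
      calc (3/4 : ℝ) * ((S.card:ℝ)/n) * n = (3/4:ℝ) * S.card := by rw [mul_assoc, div_mul_cancel₀ _ hn.ne']
        _ < (((Uu τ) ∩ S).card : ℝ) := c3
  -- the main dichotomy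
  rcases eq_or_lt_of_le hEnn with hE0 | hEpos
  · -- E = 0 case
    have hsum0 : ∑ v, (f v - markov G d f v)^2 = 0 := by rw [hE2, ← hE0]; ring
    have hfM : ∀ v : V, f v - markov G d f v = 0 := by
      intro v
      have hz := (Finset.sum_eq_zero_iff_of_nonneg
        (fun v _ => sq_nonneg (f v - markov G d f v))).mp hsum0 v (Finset.mem_univ v)
      exact pow_eq_zero_iff (two_ne_zero) |>.mp hz
    have hQ0 : ∑ p ∈ P, (f p.1 - f p.2)^2 = 0 := by
      rw [hQid]
      have hz : ∑ v, f v * (f v - markov G d f v) = 0 :=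
        Finset.sum_eq_zero fun v _ => by rw [hfM v]; ring
      rw [hz]; ring
    have hpair : ∀ p ∈ P, f p.1 = f p.2 := by
      intro p hp
      have hz := (Finset.sum_eq_zero_iff_of_nonneg
        (fun p _ => sq_nonneg (f p.1 - f p.2))).mp hQ0 p hp
      have := pow_eq_zero_iff (two_ne_zero) |>.mp hz
      linarith
    apply hgoal (1/3) (by norm_num) (by norm_num)
    have hzero : ∑ p ∈ P, |indic (Uu (1/3)) p.1 - indic (Uu (1/3)) p.2| = 0 :=
      Finset.sum_eq_zero fun p hp => by rw [hind, hind, hpair p hp]; simp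
    have hle0 : l1norm (fun v => indic (Uu (1/3)) v - markov G d (indic (Uu (1/3))) v) ≤ 0 := by
      have := hl1 (1/3)
      rw [hzero, zero_div] at this
      exact this
    refine le_trans hle0 ?_
    exact mul_nonneg (mul_nonneg (mul_nonneg (mul_nonneg (by norm_num) (Real.sqrt_nonneg _)) (Real.rpow_nonneg (by norm_num) _)) (Real.rpow_nonneg hs.le _)) (Real.sqrt_nonneg _)
  · -- E > 0 case
    obtain ⟨X, hX_def⟩ : ∃ X : ℝ, X = s ^ ((3:ℝ)/4) * Real.sqrt E := ⟨_, rfl⟩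
    have hX : 0 < X := by
      rw [hX_def]
      exact mul_pos (Real.rpow_pos_of_pos hs _) (Real.sqrt_pos.mpr hEpos)
    obtain ⟨K, hKpos, hKX⟩ : ∃ K : ℕ, 0 < K ∧ 4*s ≤ K * X := by
      obtain ⟨K₀, hK₀⟩ := exists_nat_ge (4*s / X)
      refine ⟨K₀ + 1, Nat.succ_pos _, ?_⟩
      have hle : 4*s / X ≤ ((K₀+1:ℕ):ℝ) := le_trans hK₀ (by exact_mod_cast Nat.le_succ K₀)
      calc 4*s = (4*s/X) * X := by field_simp
        _ ≤ ((K₀+1:ℕ):ℝ) * X := mul_le_mul_of_nonneg_right hle hX.le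
    have hKR : (0:ℝ) < (K:ℝ) := by exact_mod_cast hKpos
    obtain ⟨t, ht_def⟩ : ∃ t : ℕ → ℝ, t = fun k : ℕ => 1/6 + (2*(k:ℝ)+1)/(4*(K:ℝ)) := ⟨_, rfl⟩
    have ht16 : ∀ k : ℕ, 1/6 < t k := by
      intro k
      have hp : 0 < (2*(k:ℝ)+1)/(4*(K:ℝ)) := by positivity
      simp only [ht_def]; linarith
    have ht23 : ∀ k ∈ Finset.range K, t k < 2/3 := by
      intro k hk
      rw [Finset.mem_range] at hk
      have hkK : (k:ℝ) + 1 ≤ (K:ℝ) := by exact_mod_cast hk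
      have hlt : (2*(k:ℝ)+1)/(4*(K:ℝ)) < 1/2 := by
        rw [div_lt_iff₀ (by positivity)]
        nlinarith
      simp only [ht_def]; linarith
    have hgrid : ∀ x y : ℝ, (∑ k ∈ Finset.range K, if y ≤ t k ∧ t k < x then (1:ℝ) else 0)
        ≤ (if 1/6 < x ∧ y < x then 2*K*(x - y) + 1 else 0) := by
      intro x y
      rw [Finset.sum_boole]
      by_cases hcnd : 1/6 < x ∧ y < x
      · rw [if_pos hcnd]
        apply grid_count hcnd.2.le _ _ hKpos
        intro k hk
        rw [Finset.mem_filter] at hk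
        simp only [ht_def] at hk
        exact hk.2
      · rw [if_neg hcnd]
        have hempty : (Finset.range K).filter (fun k => y ≤ t k ∧ t k < x) = ∅ := by
          rw [Finset.filter_eq_empty_iff]
          intro k _ hcontra
          exact hcnd ⟨lt_trans (ht16 k) hcontra.2, lt_of_le_of_lt hcontra.1 hcontra.2⟩
        rw [hempty]; simp
    have hc : ∀ (τ : ℝ) (p : V × V), |indic (Uu τ) p.1 - indic (Uu τ) p.2|
        = (if f p.2 ≤ τ ∧ τ < f p.1 then (1:ℝ) else 0)
          + (if f p.1 ≤ τ ∧ τ < f p.2 then (1:ℝ) else 0) := by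
      intro τ p
      rw [hind, hind]
      rcases lt_or_ge τ (f p.1) with h1' | h1' <;> rcases lt_or_ge τ (f p.2) with h2' | h2'
      · rw [if_pos h1', if_pos h2', if_neg (fun hh => absurd hh.1 (not_le.mpr h2')),
          if_neg (fun hh => absurd hh.1 (not_le.mpr h1'))]
        norm_num
      · rw [if_pos h1', if_neg (not_lt.mpr h2'), if_pos ⟨h2', h1'⟩,
          if_neg (fun hh => absurd h1' (not_lt.mpr hh.1))]
        norm_num
      · rw [if_neg (not_lt.mpr h1'), if_pos h2',
          if_neg (fun hh => absurd h2' (not_lt.mpr hh.1)), if_pos ⟨h1', h2'⟩]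
        norm_num
      · rw [if_neg (not_lt.mpr h1'), if_neg (not_lt.mpr h2'),
          if_neg (fun hh => absurd hh.2 (not_lt.mpr h1')),
          if_neg (fun hh => absurd hh.2 (not_lt.mpr h2'))]
        norm_num
    obtain ⟨R, hR_def⟩ : ∃ R : Finset (V × V),
        R = P.filter (fun p => 1/6 < f p.1 ∧ f p.2 < f p.1) := ⟨_, rfl⟩
    obtain ⟨D, hD_def⟩ : ∃ D : ℝ, D = ∑ p ∈ R, (f p.1 - f p.2) := ⟨_, rfl⟩
    have hD0 : 0 ≤ D := hD_def ▸ Finset.sum_nonneg fun p hp => by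
      rw [hR_def, Finset.mem_filter] at hp
      linarith [hp.2.2]
    have hNbound : ((R.card : ℝ)) ≤ 2*d*s*n := by
      have hsub : R ⊆ P.filter (fun p => 1/6 < f p.1) := by
        rw [hR_def]
        intro p hp
        rw [Finset.mem_filter] at *
        exact ⟨hp.1, hp.2.1⟩
      have hb1 : ((R.card:ℝ)) ≤ ((P.filter (fun p => 1/6 < f p.1)).card : ℝ) := by
        exact_mod_cast Finset.card_le_card hsub
      have hb2 : (((P.filter (fun p => 1/6 < f p.1)).card : ℝ))
          = (d:ℝ) * ∑ v, (if 1/6 < f v then (1:ℝ) else 0) := by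
        rw [← Finset.sum_boole, hPsum (fun p => if 1/6 < f p.1 then (1:ℝ) else 0)]
        calc ∑ v, ∑ _u ∈ G.neighborFinset v, (if 1/6 < f v then (1:ℝ) else 0)
            = ∑ v, (d:ℝ) * (if 1/6 < f v then (1:ℝ) else 0) := by
              refine Finset.sum_congr rfl fun v _ => ?_
              rw [Finset.sum_const, nsmul_eq_mul, hdeg]
          _ = (d:ℝ) * ∑ v, (if 1/6 < f v then (1:ℝ) else 0) := by rw [Finset.mul_sum]
      have hb3 : ∑ v, (if 1/6 < f v then (1:ℝ) else 0) ≤ 2*s*n := by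
        rw [← Finset.sum_add_sum_compl S]
        have t1 : ∑ v ∈ S, (if 1/6 < f v then (1:ℝ) else 0) ≤ s*n := by
          calc ∑ v ∈ S, (if 1/6 < f v then (1:ℝ) else 0) ≤ ∑ _v ∈ S, (1:ℝ) :=
                Finset.sum_le_sum fun v _ => by split <;> norm_num
            _ = (S.card : ℝ) := by rw [Finset.sum_const, nsmul_eq_mul, mul_one]
            _ = s*n := hsn.symm
        have t2 : ∑ v ∈ Sᶜ, (if 1/6 < f v then (1:ℝ) else 0) ≤ s*n := by
          have p1 : ∀ v ∈ Sᶜ, (if 1/6 < f v then (1:ℝ) else 0) ≤ 36 * (f v - indic S v)^2 := by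
            intro v hv
            rw [Finset.mem_compl] at hv
            have hi : indic S v = 0 := by simp [indic, hv]
            rw [hi]
            split
            · next hgt => nlinarith
            · positivity
          calc ∑ v ∈ Sᶜ, (if 1/6 < f v then (1:ℝ) else 0)
              ≤ ∑ v ∈ Sᶜ, 36 * (f v - indic S v)^2 := Finset.sum_le_sum p1
            _ ≤ ∑ v, 36 * (f v - indic S v)^2 :=
                Finset.sum_le_sum_of_subset_of_nonneg (Finset.subset_univ _)
                  (fun _ _ _ => by positivity)
            _ = 36 * ∑ v, (f v - indic S v)^2 := by rw [Finset.mul_sum]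
            _ ≤ s * n := by nlinarith [hAB]
        linarith
      calc (R.card:ℝ) ≤ (d:ℝ) * ∑ v, (if 1/6 < f v then (1:ℝ) else 0) := hb1.trans (le_of_eq hb2)
        _ ≤ (d:ℝ) * (2*s*n) := mul_le_mul_of_nonneg_left hb3 hd0.le
        _ = 2*d*s*n := by ring
    have hQnn : (0:ℝ) ≤ ∑ p ∈ P, (f p.1 - f p.2)^2 :=
      Finset.sum_nonneg fun p _ => sq_nonneg _
    have hDle : D ≤ 2*d*n*X := by
      apply le_of_sq_le' _ (by positivity)
      have hcs := Finset.sum_mul_sq_le_sq_mul_sq R (fun _ => (1:ℝ)) (fun p => f p.1 - f p.2)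
      simp only [one_mul, one_pow] at hcs
      have hcard : ∑ _p ∈ R, (1:ℝ) = (R.card : ℝ) := by
        rw [Finset.sum_const, nsmul_eq_mul, mul_one]
      rw [hcard] at hcs
      have hRsub : ∑ p ∈ R, (f p.1 - f p.2)^2 ≤ ∑ p ∈ P, (f p.1 - f p.2)^2 := by
        rw [hR_def]
        exact Finset.sum_le_sum_of_subset_of_nonneg (Finset.filter_subset _ _)
          (fun _ _ _ => sq_nonneg _)
      have h34 : (s ^ ((3:ℝ)/4))^2 = s * Real.sqrt s := by
        rw [← Real.rpow_natCast (s ^ ((3:ℝ)/4)) 2, ← Real.rpow_mul hs.le]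
        rw [show (3:ℝ)/4 * ((2:ℕ):ℝ) = 1 + 1/2 by push_cast; norm_num]
        rw [Real.rpow_add hs, Real.rpow_one, Real.sqrt_eq_rpow]
      have hEs : (Real.sqrt E)^2 = E := Real.sq_sqrt hEpos.le
      have hXsq : (2*(d:ℝ)*n*X)^2 = (2*d*s*n) * (2*d*n*Real.sqrt s*E) := by
        rw [hX_def, mul_pow, mul_pow, mul_pow, mul_pow, h34, hEs]
        ring
      have s1 : D^2 ≤ (R.card:ℝ) * ∑ p ∈ R, (f p.1 - f p.2)^2 := by
        rw [hD_def]; exact hcs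
      have s2 : (R.card:ℝ) * ∑ p ∈ R, (f p.1 - f p.2)^2
          ≤ (R.card:ℝ) * ∑ p ∈ P, (f p.1 - f p.2)^2 :=
        mul_le_mul_of_nonneg_left hRsub (Nat.cast_nonneg _)
      have s3 : (R.card:ℝ) * ∑ p ∈ P, (f p.1 - f p.2)^2
          ≤ (2*(d:ℝ)*s*n) * ∑ p ∈ P, (f p.1 - f p.2)^2 :=
        mul_le_mul_of_nonneg_right hNbound hQnn
      have hann : (0:ℝ) ≤ 2*(d:ℝ)*s*n := mul_nonneg (mul_nonneg (mul_nonneg (by norm_num) hd0.le) hs.le) hn.le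
      have s4 : (2*(d:ℝ)*s*n) * ∑ p ∈ P, (f p.1 - f p.2)^2
          ≤ (2*(d:ℝ)*s*n) * (2*(d:ℝ)*n*Real.sqrt s*E) :=
        mul_le_mul_of_nonneg_left hQb hann
      rw [hXsq]
      exact le_trans s1 (le_trans s2 (le_trans s3 s4))
    have hsumk : ∑ k ∈ Finset.range K,
        (∑ p ∈ P, |indic (Uu (t k)) p.1 - indic (Uu (t k)) p.2|)
        ≤ 2*(2*K*D + R.card) := by
      rw [Finset.sum_comm]
      have hb : ∀ p ∈ P, ∑ k ∈ Finset.range K, |indic (Uu (t k)) p.1 - indic (Uu (t k)) p.2|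
          ≤ (if 1/6 < f p.1 ∧ f p.2 < f p.1 then 2*K*(f p.1 - f p.2) + 1 else 0)
            + (if 1/6 < f p.2 ∧ f p.1 < f p.2 then 2*K*(f p.2 - f p.1) + 1 else 0) := by
        intro p _
        calc ∑ k ∈ Finset.range K, |indic (Uu (t k)) p.1 - indic (Uu (t k)) p.2|
            = ∑ k ∈ Finset.range K, ((if f p.2 ≤ t k ∧ t k < f p.1 then (1:ℝ) else 0)
              + (if f p.1 ≤ t k ∧ t k < f p.2 then (1:ℝ) else 0)) :=
              Finset.sum_congr rfl fun k _ => hc (t k) p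
          _ = (∑ k ∈ Finset.range K, if f p.2 ≤ t k ∧ t k < f p.1 then (1:ℝ) else 0)
              + (∑ k ∈ Finset.range K, if f p.1 ≤ t k ∧ t k < f p.2 then (1:ℝ) else 0) :=
              Finset.sum_add_distrib
          _ ≤ _ := add_le_add (hgrid (f p.1) (f p.2)) (hgrid (f p.2) (f p.1))
      calc ∑ p ∈ P, ∑ k ∈ Finset.range K, |indic (Uu (t k)) p.1 - indic (Uu (t k)) p.2|
          ≤ ∑ p ∈ P, ((if 1/6 < f p.1 ∧ f p.2 < f p.1 then 2*K*(f p.1 - f p.2) + 1 else 0)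
            + (if 1/6 < f p.2 ∧ f p.1 < f p.2 then 2*K*(f p.2 - f p.1) + 1 else 0)) :=
            Finset.sum_le_sum hb
        _ = (∑ p ∈ P, (if 1/6 < f p.1 ∧ f p.2 < f p.1 then 2*K*(f p.1 - f p.2) + 1 else 0))
            + (∑ p ∈ P, (if 1/6 < f p.2 ∧ f p.1 < f p.2 then 2*K*(f p.2 - f p.1) + 1 else 0)) :=
            Finset.sum_add_distrib
        _ = 2 * ∑ p ∈ P, (if 1/6 < f p.1 ∧ f p.2 < f p.1 then 2*K*(f p.1 - f p.2) + 1 else 0) := by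
            rw [hswap (fun a b => if 1/6 < f a ∧ f b < f a then 2*K*(f a - f b) + 1 else 0)]
            ring
        _ = 2 * ∑ p ∈ R, (2*(K:ℝ)*(f p.1 - f p.2) + 1) := by
            rw [hR_def]
            congr 1
            exact (Finset.sum_filter _ _).symm
        _ = 2*(2*K*D + R.card) := by
            rw [Finset.sum_add_distrib, Finset.sum_const, nsmul_eq_mul, mul_one, hD_def,
              Finset.mul_sum]
    have hex : ∃ k ∈ Finset.range K, (∑ p ∈ P, |indic (Uu (t k)) p.1 - indic (Uu (t k)) p.2|)
        ≤ 2*(2*K*D + R.card)/K := by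
      apply Finset.exists_le_of_sum_le (Finset.nonempty_range_iff.mpr hKpos.ne')
      calc ∑ k ∈ Finset.range K, (∑ p ∈ P, |indic (Uu (t k)) p.1 - indic (Uu (t k)) p.2|)
          ≤ 2*(2*K*D + R.card) := hsumk
        _ = ∑ _k ∈ Finset.range K, (2*(2*(K:ℝ)*D + R.card)/K) := by
            rw [Finset.sum_const, Finset.card_range, nsmul_eq_mul]
            rw [mul_div_assoc', eq_div_iff hKR.ne']; ring
    obtain ⟨k, hk, hgk⟩ := hex
    apply hgoal (t k) (ht16 k).le (ht23 k hk)
    have hstep1 : l1norm (fun v => indic (Uu (t k)) v - markov G d (indic (Uu (t k))) v)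
        ≤ (2*(2*K*D + R.card)/K)/((d:ℝ)*n) := by
      refine le_trans (hl1 (t k)) ?_
      gcongr
    have hstep2 : (2*(2*(K:ℝ)*D + R.card)/K)/((d:ℝ)*n) ≤ 9 * X := by
      rw [div_div, div_le_iff₀ (by positivity : (0:ℝ) < (K:ℝ)*((d:ℝ)*n))]
      have e1 : 4*(K:ℝ)*D ≤ 4*(K:ℝ)*(2*(d:ℝ)*n*X) :=
        mul_le_mul_of_nonneg_left hDle (by positivity)
      have e3 : (4*s)*((d:ℝ)*n) ≤ ((K:ℝ)*X)*((d:ℝ)*n) :=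
        mul_le_mul_of_nonneg_right hKX (by positivity)
      linarith only [e1, e3, hNbound]
    have hstep3 : 9 * X ≤ 4 * Real.sqrt d * (72:ℝ)^((1:ℝ)/4) * s^((3:ℝ)/4) * Real.sqrt E := by
      have h72 : (9:ℝ)/4 ≤ (72:ℝ)^((1:ℝ)/4) := by
        have a1 : ((9:ℝ)/4) = (((9:ℝ)/4)^(4:ℕ)) ^ ((1:ℝ)/4) := by
          rw [← Real.rpow_natCast ((9:ℝ)/4) 4, ← Real.rpow_mul (by norm_num)]
          norm_num
        rw [a1]
        exact Real.rpow_le_rpow (by positivity) (by norm_num) (by norm_num)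
      have hsd : (1:ℝ) ≤ Real.sqrt d := by
        rw [show (1:ℝ) = Real.sqrt 1 by simp]
        exact Real.sqrt_le_sqrt (by exact_mod_cast hd)
      have h72nn : (0:ℝ) ≤ (72:ℝ)^((1:ℝ)/4) := le_trans (by norm_num) h72
      calc 9 * X = (4 * 1 * ((9:ℝ)/4)) * X := by ring
        _ ≤ (4 * Real.sqrt d * (72:ℝ)^((1:ℝ)/4)) * X := by
            apply mul_le_mul_of_nonneg_right _ hX.le
            nlinarith [h72, hsd, Real.sqrt_nonneg (d:ℝ), h72nn]
        _ = 4 * Real.sqrt d * (72:ℝ)^((1:ℝ)/4) * s^((3:ℝ)/4) * Real.sqrt E := by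
          rw [hX_def]; ring
    exact le_trans hstep1 (le_trans hstep2 hstep3)
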